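/- For any integers x, y ≥ 3 and a ≤ x/2, b ≤ y/2, except the case x = y = 4 and a = b = 2, we have C(x,a)·C(y,b) ≤ C(x+y-1, a+b). -/

import Mathlib

open scoped BigOperators RealInnerProductSpace
open Filter

noncomputable section

abbrev Pt (d : ℕ) := EuclideanSpace ℝ (Fin d)

def Separated {d : ℕ} (S : Finset (Pt d)) : Prop :=
  ∀ p ∈ S, ∀ q ∈ S, p ≠ q → 1 ≤ dist p q

def IsKDistSet {d : ℕ} (k : ℕ) (S : Finset (Pt d)) : Prop :=
  ∃ D : Finset ℝ, D.card ≤ k ∧ ∀ p ∈ S, ∀ q ∈ S, p ≠ q → dist p q ∈ D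

def mDist (k d : ℕ) : ℕ :=
  sSup {n : ℕ | ∃ S : Finset (Pt d), S.card = n ∧ IsKDistSet k S}

def IsNearlyKDist {d : ℕ} (k : ℕ) (ε : ℝ) (S : Finset (Pt d)) : Prop :=
  Separated S ∧ ∃ t : ℕ → ℝ, (∀ i < k, 1 ≤ t i) ∧
    ∀ p ∈ S, ∀ q ∈ S, p ≠ q → ∃ i < k, dist p q ∈ Set.Icc (t i) (t i + ε)

def Mnear (k d : ℕ) : ℕ :=
  sSup {M : ℕ | ∀ ε : ℝ, 0 < ε → ∃ S : Finset (Pt d), S.card = M ∧ IsNearlyKDist k ε S}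

def vsAngle {d : ℕ} (v : Pt d) (Λ : Submodule ℝ (Pt d)) : ℝ :=
  sInf {θ : ℝ | ∃ w ∈ Λ, w ≠ 0 ∧ θ = InnerProductGeometry.angle v w}

def IsFlatAt {d : ℕ} (S : Finset (Pt d)) (p : Pt d) (j : ℕ) (α : ℝ) : Prop :=
  ∃ Λ : Submodule ℝ (Pt d), Module.finrank ℝ Λ = j ∧
    ∀ q ∈ S, q ≠ p → vsAngle (p - q) Λ ≤ α

def Nflat (k d' d : ℕ) : ℕ :=
  sSup {N : ℕ | ∀ ε α : ℝ, 0 < ε → 0 < α →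
    ∃ S : Finset (Pt d'), S.card = N ∧ IsNearlyKDist k ε S ∧ ∀ p ∈ S, IsFlatAt S p d α}

def turanNum (n s : ℕ) : ℕ :=
  n.choose 2 - ((n % s) * (n / s + 1).choose 2 + (s - n % s) * (n / s).choose 2)

open Classical in
def nearPairs {d : ℕ} (S : Finset (Pt d)) (k : ℕ) (ε : ℝ) (t : ℕ → ℝ) :
    Finset (Pt d × Pt d) :=
  S.offDiag.filter (fun pq => ∃ i < k, dist pq.1 pq.2 ∈ Set.Icc (t i) (t i + ε))

def Mkdn (k d n : ℕ) : ℕ :=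
  sSup {M : ℕ | ∃ (S : Finset (Pt d)) (t : ℕ → ℝ), S.card = n ∧ Separated S ∧
    (∀ i < k, 1 ≤ t i) ∧ (nearPairs S k 1 t).card = 2 * M}


lemma vander_subset (m n k : ℕ) (s : Finset (ℕ × ℕ)) (hs : s ⊆ Finset.HasAntidiagonal.antidiagonal k) :
    ∑ p ∈ s, m.choose p.1 * n.choose p.2 ≤ (m + n).choose k := by
  rw [Nat.add_choose_eq]
  exact Finset.sum_le_sum_of_subset hs

lemma choose_step (y b : ℕ) (h : 2 * b + 1 ≤ y) : y.choose b ≤ y.choose (b + 1) := by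
  have h1 := Nat.choose_succ_right_eq y b
  have h2 : b + 1 ≤ y - b := by omega
  have h3 : y.choose b * (b + 1) ≤ y.choose b * (y - b) := Nat.mul_le_mul_left _ h2
  rw [← h1] at h3
  exact Nat.le_of_mul_le_mul_right h3 (by omega)

/-- The asymmetric case: `2*b+1 ≤ y`. -/
lemma case_strict (x y a b : ℕ) (hx : 1 ≤ x) (hby : 2 * b + 1 ≤ y) :
    x.choose a * y.choose b ≤ (x + y - 1).choose (a + b) := by
  have hx1 : x + y - 1 = (x - 1) + y := by omega
  rw [hx1]
  rcases a with _ | a'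
  · simpa using Nat.choose_le_choose b (by omega : y ≤ x - 1 + y)
  · obtain ⟨x', rfl⟩ : ∃ x', x = x' + 1 := ⟨x - 1, by omega⟩
    simp only [Nat.add_sub_cancel]
    have pascal : (x' + 1).choose (a' + 1) = x'.choose a' + x'.choose (a' + 1) :=
      Nat.choose_succ_succ x' a'
    have key : x'.choose (a' + 1) * y.choose b + x'.choose a' * y.choose (b + 1)
        ≤ (x' + y).choose (a' + 1 + b) := by
      have hsub : ({((a' + 1 : ℕ), b), (a', b + 1)} : Finset (ℕ × ℕ))
          ⊆ Finset.HasAntidiagonal.antidiagonal (a' + 1 + b) := by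
        intro p hp
        simp only [Finset.mem_insert, Finset.mem_singleton] at hp
        rcases hp with rfl | rfl <;> simp [Finset.HasAntidiagonal.mem_antidiagonal] <;> omega
      have hne : ((a' + 1 : ℕ), b) ≠ (a', b + 1) := by simp
      have h := vander_subset x' y (a' + 1 + b) _ hsub
      rwa [Finset.sum_insert (by simp), Finset.sum_singleton] at h
    have hmono : x'.choose a' * y.choose b ≤ x'.choose a' * y.choose (b + 1) :=
      Nat.mul_le_mul_left _ (choose_step y b hby)
    calc (x' + 1).choose (a' + 1) * y.choose b
        = x'.choose a' * y.choose b + x'.choose (a' + 1) * y.choose b := by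
          rw [pascal]; ring
      _ ≤ x'.choose (a' + 1) * y.choose b + x'.choose a' * y.choose (b + 1) := by omega
      _ ≤ (x' + y).choose (a' + 1 + b) := key

theorem stmt0 (x y a b : ℕ) (hx : 3 ≤ x) (hy : 3 ≤ y)
    (ha : 2 * a ≤ x) (hb : 2 * b ≤ y)
    (hexc : ¬ (x = 4 ∧ y = 4 ∧ a = 2 ∧ b = 2)) :
    x.choose a * y.choose b ≤ (x + y - 1).choose (a + b) := by
  rcases Nat.lt_or_ge (2 * b) y with hby | hby
  · exact case_strict x y a b (by omega) (by omega)
  rcases Nat.lt_or_ge (2 * a) x with hax | hax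
  · have h := case_strict y x b a (by omega) (by omega)
    calc x.choose a * y.choose b = y.choose b * x.choose a := by ring
      _ ≤ (y + x - 1).choose (b + a) := h
      _ = (x + y - 1).choose (a + b) := by rw [Nat.add_comm b a, Nat.add_comm y x]
  -- Now 2a = x, 2b = y
  have hxa : x = 2 * a := by omega
  have hyb : y = 2 * b := by omega
  subst hxa; subst hyb
  have ha2 : 2 ≤ a := by omega
  have hb2 : 2 ≤ b := by omega
  have hab : ¬(a = 2 ∧ b = 2) := by
    intro ⟨h1, h2⟩; exact hexc ⟨by omega, by omega, h1, h2⟩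
  -- ratio identities
  have rA : (2 * a).choose a * a = (2 * a).choose (a - 1) * (a + 1) := by
    have h := Nat.choose_succ_right_eq (2 * a) (a - 1)
    have h1 : a - 1 + 1 = a := by omega
    have h2 : 2 * a - (a - 1) = a + 1 := by omega
    rw [h1, h2] at h
    linarith [h]
  have rB : (2 * b).choose b * b = (2 * b).choose (b - 1) * (b + 1) := by
    have h := Nat.choose_succ_right_eq (2 * b) (b - 1)
    have h1 : b - 1 + 1 = b := by omega
    have h2 : 2 * b - (b - 1) = b + 1 := by omega
    rw [h1, h2] at h
    linarith [h]
  -- symmetry identities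
  have sA : (2 * a).choose (a + 1) = (2 * a).choose (a - 1) := by
    have h := Nat.choose_symm (show a + 1 ≤ 2 * a by omega)
    have e : 2 * a - (a + 1) = a - 1 := by omega
    rw [e] at h
    exact h.symm
  have sB : (2 * b).choose (b + 1) = (2 * b).choose (b - 1) := by
    have h := Nat.choose_symm (show b + 1 ≤ 2 * b by omega)
    have e : 2 * b - (b + 1) = b - 1 := by omega
    rw [e] at h
    exact h.symm
  -- (a+1)(b+1) ≤ 2ab
  have hnl : (a + 1) * (b + 1) ≤ 2 * (a * b) := by
    obtain ⟨c, rfl⟩ : ∃ c, a = c + 2 := ⟨a - 2, by omega⟩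
    obtain ⟨d, rfl⟩ : ∃ d, b = d + 2 := ⟨b - 2, by omega⟩
    have hcd : 1 ≤ c + d := by
      by_contra h
      exact hab ⟨by omega, by omega⟩
    nlinarith [Nat.zero_le (c * d)]
  -- A * B ≤ 2 * (A' * B')
  have hmain : (2 * a).choose a * (2 * b).choose b
      ≤ 2 * ((2 * a).choose (a - 1) * (2 * b).choose (b - 1)) := by
    have hc : (2 * a).choose a * (2 * b).choose b * ((a + 1) * (b + 1))
        ≤ 2 * ((2 * a).choose (a - 1) * (2 * b).choose (b - 1)) * ((a + 1) * (b + 1)) := by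
      calc (2 * a).choose a * (2 * b).choose b * ((a + 1) * (b + 1))
          ≤ (2 * a).choose a * (2 * b).choose b * (2 * (a * b)) :=
            Nat.mul_le_mul_left _ hnl
        _ = 2 * (((2 * a).choose a * a) * ((2 * b).choose b * b)) := by ring
        _ = 2 * (((2 * a).choose (a - 1) * (a + 1)) * ((2 * b).choose (b - 1) * (b + 1))) := by
            rw [rA, rB]
        _ = 2 * ((2 * a).choose (a - 1) * (2 * b).choose (b - 1)) * ((a + 1) * (b + 1)) := by
            ring
    exact Nat.le_of_mul_le_mul_right hc (by positivity)
  -- Vandermonde with three terms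
  have hsum : ∑ p ∈ ({((a - 1 : ℕ), b + 1), (a, b), (a + 1, b - 1)} : Finset (ℕ × ℕ)),
      (2 * a).choose p.1 * (2 * b).choose p.2
      = (2 * a).choose (a - 1) * (2 * b).choose (b + 1)
        + (2 * a).choose a * (2 * b).choose b
        + (2 * a).choose (a + 1) * (2 * b).choose (b - 1) := by
    rw [Finset.sum_insert (by simp), Finset.sum_insert (by simp),
      Finset.sum_singleton]
    ring
  have hvdm : (2 * a).choose (a - 1) * (2 * b).choose (b - 1)
      + (2 * a).choose a * (2 * b).choose b
      + (2 * a).choose (a - 1) * (2 * b).choose (b - 1)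
      ≤ (2 * a + 2 * b).choose (a + b) := by
    have hsub : ({((a - 1 : ℕ), b + 1), (a, b), (a + 1, b - 1)} : Finset (ℕ × ℕ))
        ⊆ Finset.HasAntidiagonal.antidiagonal (a + b) := by
      intro p hp
      simp only [Finset.mem_insert, Finset.mem_singleton] at hp
      rcases hp with rfl | rfl | rfl <;> simp [Finset.HasAntidiagonal.mem_antidiagonal] <;> omega
    have h := vander_subset (2 * a) (2 * b) (a + b) _ hsub
    rw [hsum, sA, sB] at h
    linarith [h]
  -- halving: C(2a+2b, a+b) = 2 * C(2a+2b-1, a+b)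
  have hhalf : (2 * a + 2 * b).choose (a + b) = 2 * (2 * a + 2 * b - 1).choose (a + b) := by
    have e1 : 2 * a + 2 * b = (2 * a + 2 * b - 1) + 1 := by omega
    have e2 : a + b = (a + b - 1) + 1 := by omega
    have hp : (2 * a + 2 * b).choose (a + b)
        = (2 * a + 2 * b - 1).choose (a + b - 1) + (2 * a + 2 * b - 1).choose (a + b) := by
      rw [e1, e2, Nat.choose_succ_succ]
      congr 1 <;> congr 1 <;> omega
    have hs : (2 * a + 2 * b - 1).choose (a + b - 1) = (2 * a + 2 * b - 1).choose (a + b) := by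
      have h := Nat.choose_symm (show a + b ≤ 2 * a + 2 * b - 1 by omega)
      have e3 : 2 * a + 2 * b - 1 - (a + b) = a + b - 1 := by omega
      rw [e3] at h
      exact h
    omega
  omega

end
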